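/- Let R ∈ Mₙ(k) ⊗ Mₙ(k) be an invertible solution of the quantum Yang–Baxter equation R₁₂R₁₃R₂₃ = R₂₃R₁₃R₁₂ that is biinvertible (R and the 'second inverse' R̃ with R̃ᵃᵢᵇⱼ Rʲᵇₖᶜ = δᵃₖδᶜᵢ exist). Let B(R) be the braided matrix algebra with generators uⁱⱼ and relations R₂₁ u₁ R u₂ = u₂ R₂₁ u₁ R. Then the map Δ(uⁱⱼ) = Σₖ uⁱₖ ⊗ uᵏⱼ, extended as an algebra map to the braided tensor product B(R) ⊗̲ B(R) with cross relations R⁻¹ u₁' R u₂ = u₂ R⁻¹ u₁' R (u' the generators of the second factor), is a well-defined algebra homomorphism B(R) → B(R) ⊗̲ B(R), i.e. Δ(u) = u ⊗ u respects the reflection-equation relations. -/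

import Mathlib

open scoped Matrix

variable {k : Type*} [Field k] {n : ℕ}

/-- `u ⊗ I` (leg 1) of an `n × n` matrix with entries in an algebra. -/
def leg1 {A : Type*} [Ring A] (u : Matrix (Fin n) (Fin n) A) :
    Matrix (Fin n × Fin n) (Fin n × Fin n) A :=
  fun p q => if p.2 = q.2 then u p.1 q.1 else 0

/-- `I ⊗ u` (leg 2) of an `n × n` matrix with entries in an algebra. -/
def leg2 {A : Type*} [Ring A] (u : Matrix (Fin n) (Fin n) A) :
    Matrix (Fin n × Fin n) (Fin n × Fin n) A :=
  fun p q => if p.1 = q.1 then u p.2 q.2 else 0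

/-- `R₂₁ = τ(R)`. -/
def flip21 (R : Matrix (Fin n × Fin n) (Fin n × Fin n) k) :
    Matrix (Fin n × Fin n) (Fin n × Fin n) k :=
  fun p q => R (p.2, p.1) (q.2, q.1)

/-- Base change of a scalar matrix into an algebra. -/
def mapA (A : Type*) [Ring A] [Algebra k A]
    (R : Matrix (Fin n × Fin n) (Fin n × Fin n) k) :
    Matrix (Fin n × Fin n) (Fin n × Fin n) A :=
  R.map (algebraMap k A)

/-- `R₁₂` acting on the triple tensor product. -/
def L12 (R : Matrix (Fin n × Fin n) (Fin n × Fin n) k) :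
    Matrix (Fin n × Fin n × Fin n) (Fin n × Fin n × Fin n) k :=
  fun p q => if p.2.2 = q.2.2 then R (p.1, p.2.1) (q.1, q.2.1) else 0

/-- `R₁₃` acting on the triple tensor product. -/
def L13 (R : Matrix (Fin n × Fin n) (Fin n × Fin n) k) :
    Matrix (Fin n × Fin n × Fin n) (Fin n × Fin n × Fin n) k :=
  fun p q => if p.2.1 = q.2.1 then R (p.1, p.2.2) (q.1, q.2.2) else 0

/-- `R₂₃` acting on the triple tensor product. -/
def L23 (R : Matrix (Fin n × Fin n) (Fin n × Fin n) k) :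
    Matrix (Fin n × Fin n × Fin n) (Fin n × Fin n × Fin n) k :=
  fun p q => if p.1 = q.1 then R (p.2.1, p.2.2) (q.2.1, q.2.2) else 0

/-- The quantum Yang–Baxter equation `R₁₂ R₁₃ R₂₃ = R₂₃ R₁₃ R₁₂`. -/
def QYBE (R : Matrix (Fin n × Fin n) (Fin n × Fin n) k) : Prop :=
  L12 R * L13 R * L23 R = L23 R * L13 R * L12 R

/-- Biinvertibility: `R` is invertible and has a second inverse `R̃` with
`R̃ᵃᵢᵇⱼ Rʲᵇₖᶜ = δᵃₖ δᶜᵢ`. -/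
def Biinvertible (R : Matrix (Fin n × Fin n) (Fin n × Fin n) k) : Prop :=
  (∃ Ri, R * Ri = 1 ∧ Ri * R = 1) ∧
  (∃ Rt : Matrix (Fin n × Fin n) (Fin n × Fin n) k, ∀ a i c kk : Fin n,
    (∑ b : Fin n, ∑ j : Fin n, Rt (a, i) (b, j) * R (j, b) (kk, c))
      = if a = kk ∧ c = i then 1 else 0)

/-- The reflection-equation (braided matrix) relation
`R₂₁ u₁ R v₂ = v₂ R₂₁ u₁ R` for matrices `u, v` with entries in a `k`-algebra `A`. -/
def ReflRel {A : Type*} [Ring A] [Algebra k A]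
    (R : Matrix (Fin n × Fin n) (Fin n × Fin n) k)
    (u v : Matrix (Fin n) (Fin n) A) : Prop :=
  mapA A (flip21 R) * leg1 u * mapA A R * leg2 v
    = leg2 v * mapA A (flip21 R) * leg1 u * mapA A R

/-- The braided tensor product (cross) relation `R⁻¹ v₁ R u₂ = u₂ R⁻¹ v₁ R`,
where `Ri` is the inverse of `R`. -/
def CrossRel {A : Type*} [Ring A] [Algebra k A]
    (Ri R : Matrix (Fin n × Fin n) (Fin n × Fin n) k)
    (v u : Matrix (Fin n) (Fin n) A) : Prop :=
  mapA A Ri * leg1 v * mapA A R * leg2 u = leg2 u * mapA A Ri * leg1 v * mapA A R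

section Aux

variable {A : Type*} [Ring A] [Algebra k A]

/-- Flip of the two tensor legs, on matrices with entries in `A`. -/
def flipA (M : Matrix (Fin n × Fin n) (Fin n × Fin n) A) :
    Matrix (Fin n × Fin n) (Fin n × Fin n) A :=
  fun p q => M (p.2, p.1) (q.2, q.1)

lemma flipA_mul (M N : Matrix (Fin n × Fin n) (Fin n × Fin n) A) :
    flipA (M * N) = flipA M * flipA N := by
  ext p q
  simp only [flipA, Matrix.mul_apply]
  exact (Fintype.sum_equiv (Equiv.prodComm (Fin n) (Fin n))
    (fun r => M (p.2, p.1) ((Equiv.prodComm (Fin n) (Fin n)) r) *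
      N ((Equiv.prodComm (Fin n) (Fin n)) r) (q.2, q.1))
    (fun r => M (p.2, p.1) r * N r (q.2, q.1)) (fun r => rfl)).symm

lemma flipA_one : flipA (1 : Matrix (Fin n × Fin n) (Fin n × Fin n) A) = 1 := by
  ext p q
  simp only [flipA, Matrix.one_apply, Prod.ext_iff]
  by_cases h1 : p.1 = q.1 <;> by_cases h2 : p.2 = q.2 <;> simp [h1, h2]

lemma flipA_leg1 (u : Matrix (Fin n) (Fin n) A) : flipA (leg1 u) = leg2 u := rfl

lemma flipA_leg2 (u : Matrix (Fin n) (Fin n) A) : flipA (leg2 u) = leg1 u := rfl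

lemma flipA_mapA (R : Matrix (Fin n × Fin n) (Fin n × Fin n) k) :
    flipA (mapA A R) = mapA A (flip21 R) := rfl

lemma flip21_eq_flipA (R : Matrix (Fin n × Fin n) (Fin n × Fin n) k) :
    flip21 R = flipA R := rfl

lemma mapA_mul (X Y : Matrix (Fin n × Fin n) (Fin n × Fin n) k) :
    mapA A (X * Y) = mapA A X * mapA A Y :=
  Matrix.map_mul

lemma mapA_one : mapA A (1 : Matrix (Fin n × Fin n) (Fin n × Fin n) k) = 1 :=
  Matrix.map_one _ (map_zero _) (map_one _)

lemma leg1_mul (u v : Matrix (Fin n) (Fin n) A) :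
    leg1 (u * v) = leg1 u * leg1 v := by
  ext p q
  simp only [leg1, Matrix.mul_apply, Fintype.sum_prod_type, mul_ite, ite_mul,
    zero_mul, mul_zero]
  rw [Finset.sum_comm]
  simp [Finset.sum_ite_eq]

lemma leg2_mul (u v : Matrix (Fin n) (Fin n) A) :
    leg2 (u * v) = leg2 u * leg2 v := by
  ext p q
  simp only [leg2, Matrix.mul_apply, Fintype.sum_prod_type, mul_ite, ite_mul,
    zero_mul, mul_zero]
  simp [Finset.sum_ite_eq]

end Aux

/- Statement 7: for a biinvertible solution R of the QYBE, the matrix coproduct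
Δ(u) = u ⊗ u respects the reflection-equation relations of the braided matrices B(R):
if u (first factor) and v (second factor) each satisfy R₂₁ u₁ R u₂ = u₂ R₂₁ u₁ R and the
braided tensor product cross relations R⁻¹ v₁ R u₂ = u₂ R⁻¹ v₁ R hold, then the product
matrix u v again satisfies the reflection equation. -/

theorem braided_matrix_comul_well_defined
    (R : Matrix (Fin n × Fin n) (Fin n × Fin n) k)
    (hYB : QYBE R) (hbi : Biinvertible R)
    (Ri : Matrix (Fin n × Fin n) (Fin n × Fin n) k)
    (hRi : R * Ri = 1 ∧ Ri * R = 1)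
    (A : Type*) [Ring A] [Algebra k A]
    (u v : Matrix (Fin n) (Fin n) A)
    (hu : ReflRel R u u) (hv : ReflRel R v v)
    (hcross : CrossRel Ri R v u) :
    ReflRel R (u * v) (u * v) := by
  unfold ReflRel at hu hv ⊢
  unfold CrossRel at hcross
  set S := mapA A (flip21 R) with hS
  set Si := mapA A (flip21 Ri) with hSi
  set T := mapA A R with hT
  set Ti := mapA A Ri with hTi
  set u1 := leg1 u
  set u2 := leg2 u
  set v1 := leg1 v
  set v2 := leg2 v
  -- inverse facts
  have hTT1 : T * Ti = 1 := by rw [hT, hTi, ← mapA_mul, hRi.1, mapA_one]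
  have hS1S : Si * S = 1 := by
    rw [hS, hSi, ← mapA_mul, flip21_eq_flipA, flip21_eq_flipA (k := k) R,
      ← flipA_mul, hRi.2, flipA_one, mapA_one]
  have hSS1 : S * Si = 1 := by
    rw [hS, hSi, ← mapA_mul, flip21_eq_flipA, flip21_eq_flipA (k := k) Ri,
      ← flipA_mul, hRi.1, flipA_one, mapA_one]
  -- flipped cross relation : Si v2 S u1 = u1 Si v2 S
  have hflip : Si * v2 * S * u1 = u1 * Si * v2 * S := by
    have h := congrArg flipA hcross
    simp only [flipA_mul, flipA_mapA, flipA_leg1, flipA_leg2, ← hS, ← hSi,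
      ← hT, ← hTi] at h
    exact h
  -- right-multiplied versions
  have hc1X : ∀ X, v1 * (T * (u2 * X)) = T * (u2 * (Ti * (v1 * (T * X)))) := by
    intro X
    have h := congrArg (fun M => T * M * X) hcross
    simp only [mul_assoc] at h
    rw [← mul_assoc T Ti, hTT1, one_mul] at h
    exact h
  have huX : ∀ X, S * (u1 * (T * (u2 * X))) = u2 * (S * (u1 * (T * X))) := by
    intro X
    have h := congrArg (fun M => M * X) hu
    simpa only [mul_assoc] using h
  have hv0 : v1 * (T * v2) = Si * (v2 * (S * (v1 * T))) := by
    have h := congrArg (fun M => Si * M) hv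
    simp only [mul_assoc] at h
    rw [← mul_assoc Si S, hS1S, one_mul] at h
    exact h
  have hc2X : ∀ X, S * (u1 * (Si * (v2 * X))) = v2 * (S * (u1 * (Si * X))) := by
    intro X
    have h := congrArg (fun M => S * M * (Si * X)) hflip
    simp only [mul_assoc] at h
    rw [show S * (Si * X) = X from by rw [← mul_assoc, hSS1, one_mul],
      show S * (Si * (v2 * (S * (u1 * (Si * X))))) = v2 * (S * (u1 * (Si * X)))
        from by rw [← mul_assoc, hSS1, one_mul]] at h
    exact h.symm
  have hTiX : ∀ X, T * (Ti * X) = X := by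
    intro X; rw [← mul_assoc, hTT1, one_mul]
  have hSiX : ∀ X, Si * (S * X) = X := by
    intro X; rw [← mul_assoc, hS1S, one_mul]
  -- main computation
  rw [leg1_mul, leg2_mul]
  simp only [mul_assoc, ← hS, ← hT]
  calc S * (u1 * (v1 * (T * (u2 * v2))))
      = S * (u1 * (T * (u2 * (Ti * (v1 * (T * v2)))))) := by rw [hc1X]
    _ = u2 * (S * (u1 * (T * (Ti * (v1 * (T * v2)))))) := by rw [huX]
    _ = u2 * (S * (u1 * (v1 * (T * v2)))) := by rw [hTiX]
    _ = u2 * (S * (u1 * (Si * (v2 * (S * (v1 * T)))))) := by rw [hv0]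
    _ = u2 * (v2 * (S * (u1 * (Si * (S * (v1 * T)))))) := by rw [hc2X]
    _ = u2 * (v2 * (S * (u1 * (v1 * T)))) := by rw [hSiX]
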